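/- (Edge-swap Rule 1.) If S is a diameter-2 augmenting set for G₂ containing a pair {z, w} (necessarily with w ∈ U₁ ∪ U₂), then the set S' = (S \ {{z, w}}) ∪ {{x, w}} also makes G₂ + S' have diameter at most 2, and |S'| ≤ |S|. -/

import Mathlib

/-- The vertex set of the construction `G₂` built from a graph `G₁` on vertex set `V`:
`u w` for `w ∈ U₁ ∪ U₂` (`Sum.inl` = copy in `U₁`, `Sum.inr` = copy in `U₂`),
`y p` for each unordered pair `p` of distinct vertices of `U₁ ∪ U₂`,
plus the two special vertices `z` and `x`. -/
inductive V2 (V : Type u) : Type u where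
  | u : V ⊕ V → V2 V
  | y : {p : Sym2 (V ⊕ V) // ¬ p.IsDiag} → V2 V
  | z : V2 V
  | x : V2 V

/-- The `Y`-vertex `y(a,b)` corresponding to an unordered pair `{a, b}` of distinct
vertices of `U₁ ∪ U₂`. -/
def yv {V : Type u} (a b : V ⊕ V) (h : a ≠ b) : V2 V :=
  V2.y ⟨s(a, b), by simpa using h⟩

/-- The base (pre-symmetrization) edge relation of `G₂`: copies of the edges of `G₁`
inside `U₁` and inside `U₂`, the twin edges, `Y` a clique, each `y(a,b)` joined to
`a` and `b`, `z` joined to all of `Y`, and the edge `zx`. -/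
def baseRel {V : Type u} (G : SimpleGraph V) : V2 V → V2 V → Prop
  | .u (Sum.inl a), .u (Sum.inl b) => G.Adj a b
  | .u (Sum.inr a), .u (Sum.inr b) => G.Adj a b
  | .u (Sum.inl a), .u (Sum.inr b) => a = b
  | .u w, .y p => w ∈ p.1
  | .y _, .y _ => True
  | .z, .y _ => True
  | .z, .x => True
  | _, _ => False

/-- The graph `G₂` built from `G₁ = G`. -/
def G₂ {V : Type u} (G : SimpleGraph V) : SimpleGraph (V2 V) :=
  SimpleGraph.fromRel (baseRel G)

/-- A graph has diameter at most `D` if every pair of distinct vertices is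
joined by a path (walk) with at most `D` edges. -/
def hasDiamLE {α : Type u} (H : SimpleGraph α) (D : ℕ) : Prop :=
  ∀ a b : α, a ≠ b → ∃ w : H.Walk a b, w.length ≤ D

/-- `D` is a dominating set of `G`: every vertex not in `D` is adjacent to a vertex of `D`. -/
def IsDomSet {V : Type u} (G : SimpleGraph V) (D : Set V) : Prop :=
  ∀ v ∉ D, ∃ s ∈ D, G.Adj s v

/-- The graph obtained from `H` by adding the set `S` of unordered pairs as edges. -/
def augGraph {α : Type u} (H : SimpleGraph α) (S : Set (Sym2 α)) : SimpleGraph α :=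
  SimpleGraph.fromEdgeSet (H.edgeSet ∪ S)

/-- `S` is a diameter-2 augmenting set for `G₂`: a set of unordered pairs of distinct
vertices that are not edges of `G₂`, whose addition gives a graph of diameter at most 2. -/
def IsAugSet {V : Type u} (G : SimpleGraph V) (S : Set (Sym2 (V2 V))) : Prop :=
  (∀ e ∈ S, ¬ e.IsDiag ∧ e ∉ (G₂ G).edgeSet) ∧ hasDiamLE (augGraph (G₂ G) S) 2


section Helpers

private def V2toAux {V : Type u} : V2 V → (V ⊕ V) ⊕ ({p : Sym2 (V ⊕ V) // ¬ p.IsDiag} ⊕ Bool)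
  | .u a => Sum.inl a
  | .y p => Sum.inr (Sum.inl p)
  | .z => Sum.inr (Sum.inr true)
  | .x => Sum.inr (Sum.inr false)

instance {V : Type u} [Finite V] : Finite (V2 V) := by
  apply Finite.of_injective (V2toAux (V := V))
  intro a b h
  cases a <;> cases b <;> simp_all [V2toAux]

variable {V : Type u} (G : SimpleGraph V)

private lemma g2_adj_iff {a b : V2 V} :
    (G₂ G).Adj a b ↔ a ≠ b ∧ (baseRel G a b ∨ baseRel G b a) :=
  SimpleGraph.fromRel_adj _ _ _

private lemma adj_z_y (p) : (G₂ G).Adj V2.z (V2.y p) := by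
  rw [g2_adj_iff]; exact ⟨fun h => (nomatch h), Or.inl trivial⟩

private lemma adj_z_x : (G₂ G).Adj V2.z V2.x := by
  rw [g2_adj_iff]; exact ⟨fun h => (nomatch h), Or.inl trivial⟩

private lemma adj_y_y (p q) (h : p ≠ q) : (G₂ G).Adj (V2.y p) (V2.y q) := by
  rw [g2_adj_iff]; exact ⟨by simpa using h, Or.inl trivial⟩

private lemma adj_u_y (uu : V ⊕ V) (p) (h : uu ∈ p.1) : (G₂ G).Adj (V2.u uu) (V2.y p) := by
  rw [g2_adj_iff]
  refine ⟨fun h => (nomatch h), Or.inl ?_⟩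
  cases uu <;> exact h

private lemma otherSide_ne (a : V ⊕ V) : a ≠ Sum.elim Sum.inr Sum.inl a := by
  cases a <;> simp

private lemma walk_le_two {α : Type u} {H : SimpleGraph α} :
    ∀ {a b : α} (W : H.Walk a b), W.length ≤ 2 →
      a = b ∨ H.Adj a b ∨ ∃ m, H.Adj a m ∧ H.Adj m b := by
  intro a b W hW
  cases W with
  | nil => exact Or.inl rfl
  | cons h rest =>
    cases rest with
    | nil => exact Or.inr (Or.inl h)
    | cons h2 rest2 =>
      cases rest2 with
      | nil => exact Or.inr (Or.inr ⟨_, h, h2⟩)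
      | cons h3 r =>
        simp only [SimpleGraph.Walk.length_cons] at hW
        omega

private lemma walk_one {α : Type u} {H : SimpleGraph α} {a b : α} (h : H.Adj a b) :
    ∃ w : H.Walk a b, w.length ≤ 2 :=
  ⟨.cons h .nil, by simp⟩

private lemma walk_two {α : Type u} {H : SimpleGraph α} {a m b : α}
    (h1 : H.Adj a m) (h2 : H.Adj m b) : ∃ w : H.Walk a b, w.length ≤ 2 :=
  ⟨.cons h1 (.cons h2 .nil), by simp⟩

private lemma u_y_close (uu : V ⊕ V) (p : {p : Sym2 (V ⊕ V) // ¬ p.IsDiag}) :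
    (G₂ G).Adj (V2.u uu) (V2.y p) ∨
      ∃ m, (G₂ G).Adj (V2.u uu) m ∧ (G₂ G).Adj m (V2.y p) := by
  obtain ⟨p, hp⟩ := p
  revert hp
  induction p using Sym2.ind with
  | _ c d =>
    intro hp
    by_cases h : uu ∈ s(c, d)
    · exact Or.inl (adj_u_y G uu _ h)
    · rw [Sym2.mem_iff, not_or] at h
      obtain ⟨hc, hd⟩ := h
      refine Or.inr ⟨V2.y ⟨s(uu, c), by simpa using hc⟩,
        adj_u_y G uu _ (by simp), adj_y_y G _ _ ?_⟩
      intro e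
      rw [Subtype.mk.injEq, Sym2.eq_iff] at e
      rcases e with ⟨e1, e2⟩ | ⟨e1, e2⟩
      · exact hc e1
      · exact hd e1

private lemma g2_close (a b : V2 V) (ha : a ≠ V2.x) (hb : b ≠ V2.x) (hab : a ≠ b) :
    (G₂ G).Adj a b ∨ ∃ m, (G₂ G).Adj a m ∧ (G₂ G).Adj m b := by
  have zu : ∀ vv : V ⊕ V, ∃ m, (G₂ G).Adj V2.z m ∧ (G₂ G).Adj m (V2.u vv) := by
    intro vv
    exact ⟨V2.y ⟨s(vv, Sum.elim Sum.inr Sum.inl vv), by simpa using otherSide_ne vv⟩,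
      adj_z_y G _, (adj_u_y G vv _ (by simp)).symm⟩
  cases a with
  | x => exact absurd rfl ha
  | z =>
    cases b with
    | x => exact absurd rfl hb
    | z => exact absurd rfl hab
    | y p => exact Or.inl (adj_z_y G p)
    | u vv => exact Or.inr (zu vv)
  | y p =>
    cases b with
    | x => exact absurd rfl hb
    | z => exact Or.inl (adj_z_y G p).symm
    | y q => exact Or.inl (adj_y_y G p q (by simpa using hab))
    | u vv =>
      rcases u_y_close G vv p with h | ⟨m, h1, h2⟩
      · exact Or.inl h.symm
      · exact Or.inr ⟨m, h2.symm, h1.symm⟩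
  | u uu =>
    cases b with
    | x => exact absurd rfl hb
    | z =>
      rcases zu uu with ⟨m, h1, h2⟩
      exact Or.inr ⟨m, h2.symm, h1.symm⟩
    | y q => exact u_y_close G uu q
    | u vv =>
      have huv : uu ≠ vv := by simpa using hab
      exact Or.inr ⟨V2.y ⟨s(uu, vv), by simpa using huv⟩,
        adj_u_y G uu _ (by simp), (adj_u_y G vv _ (by simp)).symm⟩

end Helpers

theorem stmt6 {V : Type u} [Fintype V] [Nontrivial V] (G : SimpleGraph V)
    (hConn : G.Connected) (S : Set (Sym2 (V2 V))) (hS : IsAugSet G S)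
    (w : V2 V) (hw : s(V2.z, w) ∈ S) :
    (∃ uu : V ⊕ V, w = V2.u uu) ∧
      hasDiamLE (augGraph (G₂ G) ((S \ {s(V2.z, w)}) ∪ {s(V2.x, w)})) 2 ∧
      ((S \ {s(V2.z, w)}) ∪ {s(V2.x, w)}).ncard ≤ S.ncard := by
  obtain ⟨hSgood, hSdiam⟩ := hS
  obtain ⟨hdiag, hedge⟩ := hSgood _ hw
  have hzw : V2.z ≠ w := by simpa using hdiag
  have hwu : ∃ uu : V ⊕ V, w = V2.u uu := by
    cases w with
    | u uu => exact ⟨uu, rfl⟩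
    | y p => exact absurd ((SimpleGraph.mem_edgeSet _).mpr (adj_z_y G p)) hedge
    | z => exact absurd rfl hzw
    | x => exact absurd ((SimpleGraph.mem_edgeSet _).mpr (adj_z_x G)) hedge
  obtain ⟨uu, rfl⟩ := hwu
  refine ⟨⟨uu, rfl⟩, ?_, ?_⟩
  · -- diameter part
    set T : Set (Sym2 (V2 V)) :=
      (S \ {s(V2.z, V2.u uu)}) ∪ {s(V2.x, V2.u uu)} with hT
    have hle : ∀ {c d : V2 V}, (G₂ G).Adj c d → (augGraph (G₂ G) T).Adj c d := by
      intro c d h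
      simp only [augGraph, SimpleGraph.fromEdgeSet_adj]
      exact ⟨Or.inl ((SimpleGraph.mem_edgeSet _).mpr h), h.ne⟩
    have transfer : ∀ {c d : V2 V}, (augGraph (G₂ G) S).Adj c d →
        s(c, d) ≠ s(V2.z, V2.u uu) → (augGraph (G₂ G) T).Adj c d := by
      intro c d hcd hne
      simp only [augGraph, SimpleGraph.fromEdgeSet_adj] at hcd ⊢
      refine ⟨?_, hcd.2⟩
      rcases hcd.1 with h | h
      · exact Or.inl h
      · exact Or.inr (Or.inl ⟨h, hne⟩)
    have hxw : (augGraph (G₂ G) T).Adj V2.x (V2.u uu) := by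
      simp only [augGraph, SimpleGraph.fromEdgeSet_adj]
      exact ⟨Or.inr (Or.inr rfl), fun h => nomatch h⟩
    have x_side : ∀ vv : V ⊕ V, (augGraph (G₂ G) T).Adj V2.x (V2.u vv) ∨
        ∃ m, (augGraph (G₂ G) T).Adj V2.x m ∧ (augGraph (G₂ G) T).Adj m (V2.u vv) := by
      intro vv
      by_cases hvu : vv = uu
      · subst hvu; exact Or.inl hxw
      · obtain ⟨W, hW⟩ := hSdiam V2.x (V2.u vv) (fun h => nomatch h)
        rcases walk_le_two W hW with h0 | h1 | ⟨m, h1, h2⟩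
        · exact nomatch h0
        · exact Or.inl (transfer h1 (by simp [Sym2.eq_iff]))
        · refine Or.inr ⟨m, transfer h1 (by simp [Sym2.eq_iff]), transfer h2 ?_⟩
          simp [Sym2.eq_iff, hvu]
    intro a b hab
    have key : ∀ c d : V2 V, c ≠ d → d ≠ V2.x →
        ((augGraph (G₂ G) T).Adj c d ∨
          ∃ m, (augGraph (G₂ G) T).Adj c m ∧ (augGraph (G₂ G) T).Adj m d) := by
      intro c d hcd hdx
      by_cases hcx : c = V2.x
      · subst hcx
        cases d with
        | x => exact absurd rfl hdx
        | z => exact Or.inl (hle (adj_z_x G).symm)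
        | y p => exact Or.inr ⟨V2.z, hle (adj_z_x G).symm, hle (adj_z_y G p)⟩
        | u vv => exact x_side vv
      · rcases g2_close G c d hcx hdx hcd with h | ⟨m, h1, h2⟩
        · exact Or.inl (hle h)
        · exact Or.inr ⟨m, hle h1, hle h2⟩
    by_cases hbx : b = V2.x
    · subst hbx
      rcases key V2.x a (Ne.symm hab) hab with h | ⟨m, h1, h2⟩
      · exact walk_one h.symm
      · exact walk_two h2.symm h1.symm
    · rcases key a b hab hbx with h | ⟨m, h1, h2⟩
      · exact walk_one h
      · exact walk_two h1 h2
  · -- cardinality part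
    have hfin : S.Finite := Set.toFinite S
    calc ((S \ {s(V2.z, V2.u uu)}) ∪ {s(V2.x, V2.u uu)}).ncard
        ≤ (S \ {s(V2.z, V2.u uu)}).ncard + ({s(V2.x, V2.u uu)} : Set (Sym2 (V2 V))).ncard :=
          Set.ncard_union_le _ _
      _ = (S \ {s(V2.z, V2.u uu)}).ncard + 1 := by rw [Set.ncard_singleton]
      _ = S.ncard := Set.ncard_diff_singleton_add_one hw hfin
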